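/- Let 𝔤 = 𝔥 ⊕ 𝔪 be a reductive decomposition and let r : 𝔪* → 𝔪 be skew, 𝔥-equivariant, and satisfy r([α, β]_r) = p_𝔪([r α, r β]) for all α, β ∈ 𝔪*. Let Im(r) := {r α : α ∈ 𝔪*} ⊆ 𝔪. Then 𝔥 + Im(r) is a Lie subalgebra of 𝔤, 𝔥 ∩ Im(r) = 0, and [u, r α] ∈ Im(r) for every u ∈ 𝔥 and α ∈ 𝔪*. -/

import Mathlib

/-- The projection `p_𝔪 : 𝔤 → 𝔪` along `𝔥`, for a decomposition `𝔤 = 𝔥 ⊕ 𝔪`. -/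
noncomputable def pm {L : Type*} [LieRing L] [LieAlgebra ℝ L]
    (H : LieSubalgebra ℝ L) (m : Submodule ℝ L)
    (hc : IsCompl H.toSubmodule m) : L →ₗ[ℝ] m :=
  Submodule.linearProjOfIsCompl m H.toSubmodule hc.symm

/-- For `x ∈ 𝔤`, the map `𝔪 → 𝔪`, `v ↦ p_𝔪([x, v])`. -/
noncomputable def adm {L : Type*} [LieRing L] [LieAlgebra ℝ L]
    (H : LieSubalgebra ℝ L) (m : Submodule ℝ L)
    (hc : IsCompl H.toSubmodule m) (x : L) : m →ₗ[ℝ] m :=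
  pm H m hc ∘ₗ (LieAlgebra.ad ℝ L x) ∘ₗ m.subtype

/-- The bracket `[α, β]_r : u ↦ α([rβ, u]_𝔪) - β([rα, u]_𝔪)` on `𝔪*`. -/
noncomputable def bracketr {L : Type*} [LieRing L] [LieAlgebra ℝ L]
    (H : LieSubalgebra ℝ L) (m : Submodule ℝ L)
    (hc : IsCompl H.toSubmodule m) (r : Module.Dual ℝ m →ₗ[ℝ] m)
    (α β : Module.Dual ℝ m) : Module.Dual ℝ m :=
  α ∘ₗ adm H m hc (r β : L) - β ∘ₗ adm H m hc (r α : L)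

/-- `r : 𝔪* → 𝔪` is skew: `ξ(rη) = -η(rξ)`. -/
def rIsSkew {L : Type*} [LieRing L] [LieAlgebra ℝ L]
    (m : Submodule ℝ L) (r : Module.Dual ℝ m →ₗ[ℝ] m) : Prop :=
  ∀ η ξ : Module.Dual ℝ m, ξ (r η) = - η (r ξ)

/-- `r : 𝔪* → 𝔪` is `𝔥`-equivariant: `r(α ∘ (ad u)|_𝔪) = -[u, rα]` for `u ∈ 𝔥`. -/
def rIsEquivariant {L : Type*} [LieRing L] [LieAlgebra ℝ L]
    (H : LieSubalgebra ℝ L) (m : Submodule ℝ L)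
    (hc : IsCompl H.toSubmodule m) (r : Module.Dual ℝ m →ₗ[ℝ] m) : Prop :=
  ∀ u ∈ H, ∀ α : Module.Dual ℝ m,
    (r (α ∘ₗ adm H m hc u) : L) = -⁅u, (r α : L)⁆

/-- `r` satisfies the Yang–Baxter-type equation `r([α,β]_r) = p_𝔪([rα, rβ])`. -/
def rIsYB {L : Type*} [LieRing L] [LieAlgebra ℝ L]
    (H : LieSubalgebra ℝ L) (m : Submodule ℝ L)
    (hc : IsCompl H.toSubmodule m) (r : Module.Dual ℝ m →ₗ[ℝ] m) : Prop :=
  ∀ α β : Module.Dual ℝ m,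
    r (bracketr H m hc r α β) = pm H m hc ⁅(r α : L), (r β : L)⁆

lemma sub_pm_mem {L : Type*} [LieRing L] [LieAlgebra ℝ L]
    (H : LieSubalgebra ℝ L) (m : Submodule ℝ L)
    (hc : IsCompl H.toSubmodule m) (x : L) :
    x - ((pm H m hc x : m) : L) ∈ H.toSubmodule := by
  have h := Submodule.projection_add_projection_eq_self hc.symm x
  rw [Submodule.projection_apply, Submodule.projection_apply] at h
  rw [pm, Submodule.linearProjOfIsCompl, ← eq_sub_of_add_eq' h]
  exact Subtype.coe_prop _

/-- for a skew, `𝔥`-equivariant solution `r` of the Yang–Baxter-type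
equation, `𝔥 + Im(r)` is a Lie subalgebra of `𝔤`, `𝔥 ∩ Im(r) = 0`, and
`[𝔥, Im(r)] ⊆ Im(r)`. -/
theorem h_plus_im_r_subalgebra {L : Type*} [LieRing L] [LieAlgebra ℝ L]
    [FiniteDimensional ℝ L]
    (H : LieSubalgebra ℝ L) (m : Submodule ℝ L)
    (hc : IsCompl H.toSubmodule m)
    (hred : ∀ u ∈ H, ∀ v ∈ m, ⁅u, v⁆ ∈ m)
    (r : Module.Dual ℝ m →ₗ[ℝ] m)
    (hskew : rIsSkew m r) (hequiv : rIsEquivariant H m hc r)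
    (hyb : rIsYB H m hc r) :
    (∀ x y : L, x ∈ H.toSubmodule ⊔ LinearMap.range (m.subtype ∘ₗ r) →
      y ∈ H.toSubmodule ⊔ LinearMap.range (m.subtype ∘ₗ r) →
      ⁅x, y⁆ ∈ H.toSubmodule ⊔ LinearMap.range (m.subtype ∘ₗ r)) ∧
    (H.toSubmodule ⊓ LinearMap.range (m.subtype ∘ₗ r) = ⊥) ∧
    (∀ u ∈ H, ∀ α : Module.Dual ℝ m,
      ⁅u, (r α : L)⁆ ∈ LinearMap.range (m.subtype ∘ₗ r)) := by
  have key3 : ∀ u ∈ H, ∀ α : Module.Dual ℝ m,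
      ⁅u, (r α : L)⁆ ∈ LinearMap.range (m.subtype ∘ₗ r) := by
    intro u hu α
    refine ⟨-(α ∘ₗ adm H m hc u), ?_⟩
    simp only [LinearMap.comp_apply, map_neg, Submodule.coe_subtype,
      Submodule.coe_neg]
    rw [hequiv u hu α, neg_neg]
  have hrange_le : LinearMap.range (m.subtype ∘ₗ r) ≤ m := by
    rintro x ⟨α, rfl⟩
    exact (r α).2
  refine ⟨?_, ?_, key3⟩
  · intro x y hx hy
    obtain ⟨u, hu, a, ha, rfl⟩ := Submodule.mem_sup.mp hx
    obtain ⟨v, hv, b, hb, rfl⟩ := Submodule.mem_sup.mp hy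
    obtain ⟨α, rfl⟩ := ha
    obtain ⟨β, rfl⟩ := hb
    simp only [LinearMap.comp_apply, Submodule.coe_subtype]
    rw [add_lie, lie_add, lie_add]
    have h1 : ⁅u, v⁆ ∈ H.toSubmodule ⊔ LinearMap.range (m.subtype ∘ₗ r) :=
      Submodule.mem_sup_left (H.lie_mem hu hv)
    have h2 : ⁅u, (r β : L)⁆ ∈ H.toSubmodule ⊔ LinearMap.range (m.subtype ∘ₗ r) :=
      Submodule.mem_sup_right (key3 u hu β)
    have h3 : ⁅(r α : L), v⁆ ∈ H.toSubmodule ⊔ LinearMap.range (m.subtype ∘ₗ r) := by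
      rw [← lie_skew, ← neg_mem_iff (G := L)]
      simp only [neg_neg]
      exact Submodule.mem_sup_right (key3 v hv α)
    have h4 : ⁅(r α : L), (r β : L)⁆ ∈
        H.toSubmodule ⊔ LinearMap.range (m.subtype ∘ₗ r) := by
      have hdecomp : ⁅(r α : L), (r β : L)⁆ =
          (⁅(r α : L), (r β : L)⁆ - ((pm H m hc ⁅(r α : L), (r β : L)⁆ : m) : L))
          + ((pm H m hc ⁅(r α : L), (r β : L)⁆ : m) : L) := by abel
      rw [hdecomp]
      refine Submodule.add_mem _ (Submodule.mem_sup_left (sub_pm_mem H m hc _)) ?_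
      refine Submodule.mem_sup_right ⟨bracketr H m hc r α β, ?_⟩
      simp only [LinearMap.comp_apply, Submodule.coe_subtype]
      rw [hyb α β]
    exact Submodule.add_mem _ (Submodule.add_mem _ h1 h2) (Submodule.add_mem _ h3 h4)
  · rw [eq_bot_iff, ← hc.inf_eq_bot]
    exact inf_le_inf_left _ hrange_le
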